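/- On a Riemannian W₃-manifold, the square norm of ∇P satisfies ‖∇P‖² = −2 g^{ij} g^{kl} g( (∇_{e_i}P)e_k , (∇_{e_l}P)e_j ), where ‖∇P‖² = g^{ij} g^{kl} g( (∇_{e_i}P)e_k , (∇_{e_j}P)e_l ). -/

import Mathlib

open Finset

private lemma W3_sum_swap_pairs {ι : Type*} [Fintype ι] (h : ι → ι → ι → ι → ℝ) :
    (∑ k, ∑ l, ∑ m, ∑ n, h k l m n) = ∑ k, ∑ l, ∑ m, ∑ n, h m n k l := by
  calc (∑ k, ∑ l, ∑ m, ∑ n, h k l m n)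
      = ∑ k, ∑ m, ∑ l, ∑ n, h k l m n :=
        Finset.sum_congr rfl fun k _ => Finset.sum_comm
    _ = ∑ m, ∑ k, ∑ l, ∑ n, h k l m n := Finset.sum_comm
    _ = ∑ m, ∑ k, ∑ n, ∑ l, h k l m n :=
        Finset.sum_congr rfl fun m _ => Finset.sum_congr rfl fun k _ => Finset.sum_comm
    _ = ∑ m, ∑ n, ∑ k, ∑ l, h k l m n :=
        Finset.sum_congr rfl fun m _ => Finset.sum_comm

private lemma W3_key {ι : Type*} [Fintype ι] (w : ι → ι → ℝ) (f : ι → ι → ι → ℝ)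
    (hf1 : ∀ i k m, f i k m = f i m k)
    (hf2 : ∀ i k m, f i k m + f k m i + f m i k = 0) :
    (∑ i, ∑ j, ∑ k, ∑ l, ∑ m, ∑ n,
        w i j * w k l * (w m n * (f i k m * f j l n)))
      = -2 * ∑ i, ∑ j, ∑ k, ∑ l, ∑ m, ∑ n,
        w i j * w k l * (w m n * (f i k m * f l j n)) := by
  have hB : (∑ i, ∑ j, ∑ k, ∑ l, ∑ m, ∑ n,
        w i j * w k l * (w m n * (f i k m * f n j l)))
      = ∑ i, ∑ j, ∑ k, ∑ l, ∑ m, ∑ n,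
        w i j * w k l * (w m n * (f i k m * f l j n)) := by
    refine Finset.sum_congr rfl fun i _ => Finset.sum_congr rfl fun j _ => ?_
    calc (∑ k, ∑ l, ∑ m, ∑ n, w i j * w k l * (w m n * (f i k m * f n j l)))
        = ∑ k, ∑ l, ∑ m, ∑ n, w i j * w m n * (w k l * (f i m k * f l j n)) :=
          W3_sum_swap_pairs (fun k l m n => w i j * w k l * (w m n * (f i k m * f n j l)))
      _ = ∑ k, ∑ l, ∑ m, ∑ n, w i j * w k l * (w m n * (f i k m * f l j n)) := by
          refine Finset.sum_congr rfl fun k _ => Finset.sum_congr rfl fun l _ =>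
            Finset.sum_congr rfl fun m _ => Finset.sum_congr rfl fun n _ => ?_
          rw [hf1 i m k]; ring
  have hsplit : (∑ i, ∑ j, ∑ k, ∑ l, ∑ m, ∑ n,
        w i j * w k l * (w m n * (f i k m * f j l n)))
      = (∑ i, ∑ j, ∑ k, ∑ l, ∑ m, ∑ n,
          (-(w i j * w k l * (w m n * (f i k m * f l j n)))
            - w i j * w k l * (w m n * (f i k m * f n j l)))) := by
    refine Finset.sum_congr rfl fun i _ => Finset.sum_congr rfl fun j _ =>
      Finset.sum_congr rfl fun k _ => Finset.sum_congr rfl fun l _ =>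
      Finset.sum_congr rfl fun m _ => Finset.sum_congr rfl fun n _ => ?_
    have h1 := hf2 j l n
    have h2 := hf1 l n j
    have hx : f j l n = -(f l j n) - f n j l := by linarith
    rw [hx]; ring
  rw [hsplit]
  simp only [Finset.sum_sub_distrib, Finset.sum_neg_distrib]
  rw [hB]; ring

private lemma W3_expand {X : Type*} [AddCommGroup X] [Module ℝ X]
    {ι : Type*} [Fintype ι] [DecidableEq ι]
    (g : X →ₗ[ℝ] X →ₗ[ℝ] ℝ) (b : Module.Basis ι ℝ X) (ginv : ι → ι → ℝ)
    (hgsymm : ∀ x y : X, g x y = g y x)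
    (hginv : ∀ i k : ι, ∑ j, g (b i) (b j) * ginv j k = if i = k then 1 else 0)
    (v w : X) :
    g v w = ∑ m, ∑ n, ginv m n * (g v (b m) * g w (b n)) := by
  have key1 : ∀ (i : ι) (w : X),
      g (b i) w = ∑ m, ∑ n, ginv m n * (g (b i) (b m) * g w (b n)) := by
    intro i w
    rw [Finset.sum_comm]
    have : ∀ n : ι, (∑ m, ginv m n * (g (b i) (b m) * g w (b n)))
        = (if i = n then 1 else 0) * g w (b n) := by
      intro n
      rw [← hginv i n, Finset.sum_mul]
      exact Finset.sum_congr rfl fun m _ => by ring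
    simp only [this]
    simp [hgsymm w (b i)]
  conv_lhs => rw [← Module.Basis.sum_repr b v]
  have hrepr : ∀ m, g v (b m) = ∑ i, b.repr v i * g (b i) (b m) := by
    intro m
    conv_lhs => rw [← Module.Basis.sum_repr b v]
    simp only [map_sum, map_smul, LinearMap.sum_apply, LinearMap.smul_apply, smul_eq_mul]
  simp only [map_sum, map_smul, LinearMap.sum_apply, LinearMap.smul_apply, smul_eq_mul, hrepr]
  have hpt : ∀ m n : ι, ginv m n * ((∑ i, b.repr v i * g (b i) (b m)) * g w (b n))
      = ∑ i, b.repr v i * (ginv m n * (g (b i) (b m) * g w (b n))) := by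
    intro m n
    rw [Finset.sum_mul, Finset.mul_sum]
    exact Finset.sum_congr rfl fun i _ => by ring
  simp only [hpt]
  conv_rhs =>
    rw [show (∑ m : ι, ∑ n : ι, ∑ i : ι,
        b.repr v i * (ginv m n * (g (b i) (b m) * g w (b n))))
      = ∑ m : ι, ∑ i : ι, ∑ n : ι,
        b.repr v i * (ginv m n * (g (b i) (b m) * g w (b n))) from
      Finset.sum_congr rfl fun m _ => Finset.sum_comm]
    rw [Finset.sum_comm]
  simp only [← Finset.mul_sum]
  exact Finset.sum_congr rfl fun i _ => by rw [← key1 i w]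

open Finset in
/-- On a Riemannian `W₃`-manifold, the square norm of `∇P`,
`‖∇P‖² = g^{ij} g^{kl} g((∇_{e_i}P)e_k, (∇_{e_j}P)e_l)`, satisfies
`‖∇P‖² = −2 g^{ij} g^{kl} g((∇_{e_i}P)e_k, (∇_{e_l}P)e_j)`.
Here `(e_i)` is a basis of the tangent space and `g^{ij}` the components of the
inverse of the metric. -/
theorem W3_square_norm_nablaP
    {X : Type*} [AddCommGroup X] [Module ℝ X]
    {ι : Type*} [Fintype ι] [DecidableEq ι]
    (g : X →ₗ[ℝ] X →ₗ[ℝ] ℝ) (P : X →ₗ[ℝ] X)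
    (nabla : X → X → X) (D : X → ℝ → ℝ)
    (b : Module.Basis ι ℝ X) (ginv : ι → ι → ℝ)
    (hgsymm : ∀ x y : X, g x y = g y x)
    (hP2 : ∀ x : X, P (P x) = x)
    (hPg : ∀ x y : X, g (P x) (P y) = g x y)
    (hcompat : ∀ x y z : X, D x (g y z) = g (nabla x y) z + g y (nabla x z))
    -- `ginv` is the inverse matrix of the metric in the basis `b`
    (hginv : ∀ i k : ι, ∑ j, g (b i) (b j) * ginv j k = if i = k then 1 else 0)
    (hginvsymm : ∀ i j : ι, ginv i j = ginv j i) :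
    let nablaP : X → X → X := fun x y => nabla x (P y) - P (nabla x y)
    let F : X → X → X → ℝ := fun x y z => g (nablaP x y) z
    -- the W₃ condition
    (∀ x y z : X, F x y z + F y z x + F z x y = 0) →
    (∑ i, ∑ j, ∑ k, ∑ l,
        ginv i j * ginv k l * g (nablaP (b i) (b k)) (nablaP (b j) (b l)))
      = -2 * ∑ i, ∑ j, ∑ k, ∑ l,
        ginv i j * ginv k l * g (nablaP (b i) (b k)) (nablaP (b l) (b j)) := by
  intro nablaP F hW3
  -- `P` is symmetric w.r.t. `g`
  have hPsym : ∀ u v : X, g (P u) v = g u (P v) := by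
    intro u v
    calc g (P u) v = g (P u) (P (P v)) := by rw [hP2]
      _ = g u (P v) := hPg u (P v)
  -- `F` is symmetric in its last two arguments
  have hFsymm : ∀ x y z : X, F x y z = F x z y := by
    intro x y z
    have e1 : F x y z = g (nabla x (P y)) z - g (P (nabla x y)) z := by
      simp only [F, nablaP, map_sub, LinearMap.sub_apply]
    have e2 : F x z y = g (nabla x (P z)) y - g (P (nabla x z)) y := by
      simp only [F, nablaP, map_sub, LinearMap.sub_apply]
    have c1 := hcompat x (P y) z
    have c2 := hcompat x (P z) y
    have d1 : g (P (nabla x y)) z = g (P z) (nabla x y) := by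
      rw [hPsym (nabla x y) z, hgsymm]
    have d2 : g (P (nabla x z)) y = g (P y) (nabla x z) := by
      rw [hPsym (nabla x z) y, hgsymm]
    have d3 : g (P y) z = g (P z) y := by rw [hPsym y z, hgsymm]
    rw [e1, e2, d1, d2]
    have c1' : g (nabla x (P y)) z = D x (g (P y) z) - g (P y) (nabla x z) := by
      linarith
    have c2' : g (nabla x (P z)) y = D x (g (P z) y) - g (P z) (nabla x y) := by
      linarith
    rw [c1', c2', d3]
    ring
  -- expand the inner products via the basis
  have hexp1 : ∀ i j k l : ι,
      g (nablaP (b i) (b k)) (nablaP (b j) (b l))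
        = ∑ m, ∑ n, ginv m n * (F (b i) (b k) (b m) * F (b j) (b l) (b n)) :=
    fun i j k l => W3_expand g b ginv hgsymm hginv _ _
  have hexp2 : ∀ i j k l : ι,
      g (nablaP (b i) (b k)) (nablaP (b l) (b j))
        = ∑ m, ∑ n, ginv m n * (F (b i) (b k) (b m) * F (b l) (b j) (b n)) :=
    fun i j k l => W3_expand g b ginv hgsymm hginv _ _
  simp only [hexp1, hexp2, Finset.mul_sum]
  have := W3_key ginv (fun i k m => F (b i) (b k) (b m))
    (fun i k m => hFsymm (b i) (b k) (b m))
    (fun i k m => hW3 (b i) (b k) (b m))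
  refine this.trans ?_
  simp [Finset.mul_sum]
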